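/- Let p be a permutation of length n written as p = LnR, where n is the maximum entry and L and R are both nonempty. Then s(p) = s(L)s(R)n avoids both 231 and 312 if and only if s(L) and s(R) both avoid 231 and 312 (so each is layered) and one of the following holds: (1) every entry of L is less than every entry of R, or (2) every entry of the last layer of s(L) is greater than every entry of the first layer of s(R), every entry of L not in the last layer of s(L) is less than every entry of R, and every entry of R not in the first layer of s(R) is greater than every entry of L. -/

import Mathlib

/-- The stack-sorting map `s`, implemented with a fuel parameter (the fuel
`l.length` always suffices, since the maximum of a nonempty list of naturals is
attained, so both recursive calls are on strictly shorter lists).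
`s(ε) = ε` and `s(LmR) = s(L) s(R) m` where `m` is the maximum entry. -/
def stackSortAux : ℕ → List ℕ → List ℕ
  | 0, _ => []
  | _ + 1, [] => []
  | fuel + 1, a :: t =>
      let m := (a :: t).foldr max 0
      stackSortAux fuel ((a :: t).takeWhile (fun x => x ≠ m)) ++
        stackSortAux fuel (((a :: t).dropWhile (fun x => x ≠ m)).tail) ++ [m]

/-- The stack-sorting map on finite sequences of (distinct) naturals. -/
def stackSort (l : List ℕ) : List ℕ := stackSortAux l.length l

/-- `l` is a permutation of `{1, 2, …, n}`, written in one-line notation. -/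
def IsPermList (n : ℕ) (l : List ℕ) : Prop :=
  l.Perm ((List.range n).map (· + 1))

/-- The sequence `p` contains the pattern `q`: there is a strictly increasing choice
of positions of `p` on which the entries compare exactly as the entries of `q` do. -/
def ContainsPat (p q : List ℕ) : Prop :=
  ∃ f : Fin q.length → Fin p.length, StrictMono f ∧
    ∀ i j : Fin q.length, q.get i < q.get j ↔ p.get (f i) < p.get (f j)

/-- The sequence `p` avoids the pattern `q`. -/
def AvoidsPat (p q : List ℕ) : Prop := ¬ ContainsPat p q

/-- A sequence is layered if it is a concatenation of (nonempty) strictly decreasing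
blocks (the layers) such that every entry of each layer is smaller than every entry
of every later layer. -/
def IsLayered (p : List ℕ) : Prop :=
  ∃ blocks : List (List ℕ),
    p = blocks.flatten ∧
    (∀ blk ∈ blocks, blk ≠ [] ∧ blk.Pairwise (· > ·)) ∧
    blocks.Pairwise (fun b c => ∀ x ∈ b, ∀ y ∈ c, x < y)

/-- Length of the maximal strictly decreasing prefix of a list. -/
def decRunLen : List ℕ → ℕ
  | [] => 0
  | [_] => 1
  | a :: b :: t => if b < a then decRunLen (b :: t) + 1 else 1

/-- Length of the maximal strictly increasing prefix of a list. -/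
def incRunLen : List ℕ → ℕ
  | [] => 0
  | [_] => 1
  | a :: b :: t => if a < b then incRunLen (b :: t) + 1 else 1

/-- The first layer of a (layered) sequence: its maximal strictly decreasing prefix. -/
def firstLayer (q : List ℕ) : List ℕ := q.take (decRunLen q)

/-- The last layer of a (layered) sequence: its maximal strictly decreasing suffix. -/
def lastLayer (q : List ℕ) : List ℕ := (q.reverse.take (incRunLen q.reverse)).reverse


private def No231 (p : List ℕ) : Prop :=
  ∀ a b c : ℕ, a < b → b < c → c < p.length →
    ¬(p.getD c 0 < p.getD a 0 ∧ p.getD a 0 < p.getD b 0)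

private def No312 (p : List ℕ) : Prop :=
  ∀ a b c : ℕ, a < b → b < c → c < p.length →
    ¬(p.getD b 0 < p.getD c 0 ∧ p.getD c 0 < p.getD a 0)

private lemma le_foldr_max {l : List ℕ} {x : ℕ} (h : x ∈ l) : x ≤ l.foldr max 0 := by
  induction l with
  | nil => simp at h
  | cons a t ih =>
    rcases List.mem_cons.1 h with rfl | h
    · exact le_max_left _ _
    · exact le_trans (ih h) (le_max_right _ _)

private lemma foldr_max_le {l : List ℕ} {n : ℕ} (h : ∀ x ∈ l, x ≤ n) : l.foldr max 0 ≤ n := by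
  induction l with
  | nil => simp
  | cons a t ih =>
    simp only [List.foldr_cons, max_le_iff]
    exact ⟨h a (by simp), ih fun x hx => h x (by simp [hx])⟩

private lemma foldr_max_mem {l : List ℕ} (h : l ≠ []) : l.foldr max 0 ∈ l := by
  induction l with
  | nil => simp at h
  | cons a t ih =>
    rcases eq_or_ne t [] with rfl | ht
    · simp
    · show max a (t.foldr max 0) ∈ a :: t
      rcases max_cases a (t.foldr max 0) with ⟨h1, _⟩ | ⟨h1, _⟩
      · rw [h1]; exact List.mem_cons_self
      · rw [h1]; exact List.mem_cons_of_mem _ (ih ht)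

private lemma takeWhile_length_lt {p : ℕ → Bool} {l : List ℕ} {a : ℕ}
    (ha : a ∈ l) (hpa : p a = false) : (l.takeWhile p).length < l.length := by
  rcases lt_or_eq_of_le (List.Sublist.length_le (List.takeWhile_sublist p)) with h | h
  · exact h
  · exfalso
    have := (List.takeWhile_sublist p (l := l)).eq_of_length h
    have := List.takeWhile_eq_self_iff.1 this a ha
    rw [hpa] at this; exact Bool.false_ne_true this

private lemma stackSortAux_key : ∀ N, ∀ l : List ℕ, l.length ≤ N → ∀ f, l.length ≤ f →
    stackSortAux f l = stackSortAux l.length l := by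
  intro N
  induction N with
  | zero =>
    intro l hl f _
    have : l = [] := List.length_eq_zero_iff.1 (Nat.le_zero.1 hl)
    subst this
    cases f <;> rfl
  | succ N ih =>
    intro l hl f hf
    match l with
    | [] => cases f <;> rfl
    | a :: t =>
      match f with
      | f' + 1 =>
        simp only [stackSortAux, List.length_cons]
        set m := (a :: t).foldr max 0 with hm
        have hmem : m ∈ a :: t := foldr_max_mem (by simp)
        have hpm : (fun x => decide (x ≠ m)) m = false := by simp
        have ht1 : ((a :: t).takeWhile (fun x => x ≠ m)).length ≤ t.length := by
          have := takeWhile_length_lt (p := fun x => decide (x ≠ m)) hmem hpm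
          simpa [Nat.lt_succ_iff] using this
        have ht2 : (((a :: t).dropWhile (fun x => x ≠ m)).tail).length ≤ t.length := by
          have h1 : ((a :: t).dropWhile (fun x => x ≠ m)).length ≤ t.length + 1 :=
            List.Sublist.length_le (List.dropWhile_sublist _)
          have := List.length_tail (l := (a :: t).dropWhile (fun x => x ≠ m))
          omega
        have hNt : t.length ≤ N := by simpa [Nat.succ_le_succ_iff] using hl
        have hft : t.length ≤ f' := by simpa [Nat.succ_le_succ_iff] using hf
        rw [ih _ (le_trans ht1 hNt) _ (le_trans ht1 hft),
            ih _ (le_trans ht2 hNt) _ (le_trans ht2 hft),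
            ih _ (le_trans ht1 hNt) _ ht1,
            ih _ (le_trans ht2 hNt) _ ht2]

private lemma stackSortAux_eq {l : List ℕ} {f : ℕ} (h : l.length ≤ f) :
    stackSortAux f l = stackSort l :=
  stackSortAux_key l.length l le_rfl f h

private lemma stackSort_eq_split (l : List ℕ) (h : l ≠ []) :
    stackSort l = stackSort (l.takeWhile (fun x => x ≠ l.foldr max 0)) ++
      stackSort ((l.dropWhile (fun x => x ≠ l.foldr max 0)).tail) ++ [l.foldr max 0] := by
  obtain ⟨a, t, rfl⟩ := List.exists_cons_of_ne_nil h
  show stackSortAux (t.length + 1) (a :: t) = _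
  simp only [stackSortAux]
  set m := (a :: t).foldr max 0 with hm
  have hmem : m ∈ a :: t := foldr_max_mem (by simp)
  have hpm : (fun x => decide (x ≠ m)) m = false := by simp
  have ht1 : ((a :: t).takeWhile (fun x => x ≠ m)).length ≤ t.length := by
    have := takeWhile_length_lt (p := fun x => decide (x ≠ m)) hmem hpm
    simpa [Nat.lt_succ_iff] using this
  have ht2 : (((a :: t).dropWhile (fun x => x ≠ m)).tail).length ≤ t.length := by
    have h1 : ((a :: t).dropWhile (fun x => x ≠ m)).length ≤ t.length + 1 :=
      List.Sublist.length_le (List.dropWhile_sublist _)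
    have := List.length_tail (l := (a :: t).dropWhile (fun x => x ≠ m))
    omega
  rw [stackSortAux_eq ht1, stackSortAux_eq ht2]

private lemma stackSort_decomp (l : List ℕ) (h : l ≠ []) :
    l.takeWhile (fun x => x ≠ l.foldr max 0) ++
      l.foldr max 0 :: (l.dropWhile (fun x => x ≠ l.foldr max 0)).tail = l := by
  set m := l.foldr max 0 with hm
  have hmem : m ∈ l := foldr_max_mem h
  have hd : l.dropWhile (fun x => x ≠ m) ≠ [] := by
    intro he
    have := List.dropWhile_eq_nil_iff.1 he m hmem
    simp at this
  have hh : (l.dropWhile (fun x => x ≠ m)).head hd = m := by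
    have := List.head_dropWhile_not (fun x => decide (x ≠ m)) hd
    simpa using this
  have h3 := List.cons_head_tail (l := l.dropWhile (fun x => decide (x ≠ m))) hd
  rw [hh] at h3
  conv_rhs => rw [← List.takeWhile_append_dropWhile (p := fun x => decide (x ≠ m)) (l := l),
    ← h3]

private lemma stackSort_perm_key : ∀ N, ∀ l : List ℕ, l.length ≤ N → (stackSort l).Perm l := by
  intro N
  induction N with
  | zero =>
    intro l hl
    have : l = [] := List.length_eq_zero_iff.1 (Nat.le_zero.1 hl)
    subst this; rfl
  | succ N ih =>
    intro l hl
    rcases eq_or_ne l [] with rfl | h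
    · rfl
    · rw [stackSort_eq_split l h]
      set m := l.foldr max 0 with hm
      set t1 := l.takeWhile (fun x => x ≠ m) with h1
      set t2 := (l.dropWhile (fun x => x ≠ m)).tail with h2
      have hdec : t1 ++ m :: t2 = l := stackSort_decomp l h
      have hlen : t1.length + (m :: t2).length = l.length := by
        rw [← List.length_append, hdec]
      have hl1 : t1.length ≤ N := by simp at hlen; omega
      have hl2 : t2.length ≤ N := by simp at hlen; omega
      have p1 : (stackSort t1 ++ stackSort t2 ++ [m]).Perm (t1 ++ t2 ++ [m]) :=
        ((ih t1 hl1).append (ih t2 hl2)).append_right [m]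
      have p2 : (t1 ++ t2 ++ [m]).Perm (t1 ++ m :: t2) := by
        rw [List.append_assoc]
        exact List.Perm.append_left _ (List.perm_append_singleton _ _)
      exact (p1.trans p2).trans (by rw [hdec])

private lemma stackSort_perm (l : List ℕ) : (stackSort l).Perm l :=
  stackSort_perm_key l.length l le_rfl

private lemma get_eq_getD (p : List ℕ) (i : Fin p.length) : p.get i = p.getD i.val 0 := by
  rw [List.getD_eq_getElem _ _ i.isLt, List.get_eq_getElem]

private lemma contains_iff_aux (p : List ℕ) (q : List ℕ) (hq : q.length = 3) : True := trivial

private lemma contains231_iff (p : List ℕ) :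
    ContainsPat p [2, 3, 1] ↔ ∃ a b c : ℕ, ∃ _ : c < p.length, a < b ∧ b < c ∧
      p.getD c 0 < p.getD a 0 ∧ p.getD a 0 < p.getD b 0 := by
  constructor
  · rintro ⟨f, hf, hiff⟩
    refine ⟨(f ⟨0, by decide⟩).val, (f ⟨1, by decide⟩).val, (f ⟨2, by decide⟩).val,
      (f ⟨2, by decide⟩).isLt, ?_, ?_, ?_, ?_⟩
    · exact hf (by decide)
    · exact hf (by decide)
    · have := (hiff ⟨2, by decide⟩ ⟨0, by decide⟩).mp (by decide)
      simpa [get_eq_getD] using this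
    · have := (hiff ⟨0, by decide⟩ ⟨1, by decide⟩).mp (by decide)
      simpa [get_eq_getD] using this
  · rintro ⟨a, b, c, hc, hab, hbc, h1, h2⟩
    have hb : b < p.length := lt_trans hbc hc
    have ha : a < p.length := lt_trans hab hb
    simp only [List.getD_eq_getElem _ _ hc, List.getD_eq_getElem _ _ ha,
      List.getD_eq_getElem _ _ hb] at h1 h2
    refine ⟨fun i => if i.val = 0 then ⟨a, ha⟩ else if i.val = 1 then ⟨b, hb⟩ else ⟨c, hc⟩,
      ?_, ?_⟩
    · intro i j hij
      fin_cases i <;> fin_cases j <;>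
        simp_all [Fin.lt_def] <;> omega
    · intro i j
      fin_cases i <;> fin_cases j <;>
        simp [Fin.lt_def, get_eq_getD] <;> omega

private lemma contains312_iff (p : List ℕ) :
    ContainsPat p [3, 1, 2] ↔ ∃ a b c : ℕ, ∃ _ : c < p.length, a < b ∧ b < c ∧
      p.getD b 0 < p.getD c 0 ∧ p.getD c 0 < p.getD a 0 := by
  constructor
  · rintro ⟨f, hf, hiff⟩
    refine ⟨(f ⟨0, by decide⟩).val, (f ⟨1, by decide⟩).val, (f ⟨2, by decide⟩).val,
      (f ⟨2, by decide⟩).isLt, ?_, ?_, ?_, ?_⟩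
    · exact hf (by decide)
    · exact hf (by decide)
    · have := (hiff ⟨1, by decide⟩ ⟨2, by decide⟩).mp (by decide)
      simpa [get_eq_getD] using this
    · have := (hiff ⟨2, by decide⟩ ⟨0, by decide⟩).mp (by decide)
      simpa [get_eq_getD] using this
  · rintro ⟨a, b, c, hc, hab, hbc, h1, h2⟩
    have hb : b < p.length := lt_trans hbc hc
    have ha : a < p.length := lt_trans hab hb
    simp only [List.getD_eq_getElem _ _ hc, List.getD_eq_getElem _ _ ha,
      List.getD_eq_getElem _ _ hb] at h1 h2
    refine ⟨fun i => if i.val = 0 then ⟨a, ha⟩ else if i.val = 1 then ⟨b, hb⟩ else ⟨c, hc⟩,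
      ?_, ?_⟩
    · intro i j hij
      fin_cases i <;> fin_cases j <;>
        simp_all [Fin.lt_def] <;> omega
    · intro i j
      fin_cases i <;> fin_cases j <;>
        simp [Fin.lt_def, get_eq_getD] <;> omega

private lemma avoids231_iff (p : List ℕ) : AvoidsPat p [2, 3, 1] ↔ No231 p := by
  rw [AvoidsPat, contains231_iff]
  constructor
  · intro h a b c hab hbc hc hcon
    exact h ⟨a, b, c, hc, hab, hbc, hcon.1, hcon.2⟩
  · rintro h ⟨a, b, c, hc, hab, hbc, h1, h2⟩
    exact h a b c hab hbc hc ⟨h1, h2⟩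

private lemma avoids312_iff (p : List ℕ) : AvoidsPat p [3, 1, 2] ↔ No312 p := by
  rw [AvoidsPat, contains312_iff]
  constructor
  · intro h a b c hab hbc hc hcon
    exact h ⟨a, b, c, hc, hab, hbc, hcon.1, hcon.2⟩
  · rintro h ⟨a, b, c, hc, hab, hbc, h1, h2⟩
    exact h a b c hab hbc hc ⟨h1, h2⟩

private lemma decRunLen_pos {l : List ℕ} (h : l ≠ []) : 1 ≤ decRunLen l := by
  match l with
  | [a] => simp [decRunLen]
  | a :: b :: t => rw [decRunLen]; split <;> omega

private lemma incRunLen_pos {l : List ℕ} (h : l ≠ []) : 1 ≤ incRunLen l := by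
  match l with
  | [a] => simp [incRunLen]
  | a :: b :: t => rw [incRunLen]; split <;> omega

private lemma decRunLen_le (l : List ℕ) : decRunLen l ≤ l.length := by
  induction l with
  | nil => simp [decRunLen]
  | cons a t ih =>
    match t with
    | [] => simp [decRunLen]
    | b :: t' =>
      rw [decRunLen]
      split <;> simp_all <;> omega

private lemma incRunLen_le (l : List ℕ) : incRunLen l ≤ l.length := by
  induction l with
  | nil => simp [incRunLen]
  | cons a t ih =>
    match t with
    | [] => simp [incRunLen]
    | b :: t' =>
      rw [incRunLen]
      split <;> simp_all <;> omega

private lemma decRun_chain (l : List ℕ) : (l.take (decRunLen l)).IsChain (· > ·) := by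
  induction l with
  | nil => simp
  | cons a t ih =>
    match t with
    | [] => simp [decRunLen]
    | b :: t' =>
      rw [decRunLen]
      split
      · rw [List.take_succ_cons]
        refine List.IsChain.cons ih ?_
        intro y hy
        have h1 : 1 ≤ decRunLen (b :: t') := decRunLen_pos (by simp)
        obtain ⟨k, hk⟩ : ∃ k, decRunLen (b :: t') = k + 1 := ⟨_, (Nat.succ_pred_eq_of_pos h1).symm⟩
        rw [hk, List.take_succ_cons] at hy
        simp at hy
        subst hy
        assumption
      · simp

private lemma incRun_chain (l : List ℕ) : (l.take (incRunLen l)).IsChain (· < ·) := by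
  induction l with
  | nil => simp
  | cons a t ih =>
    match t with
    | [] => simp [incRunLen]
    | b :: t' =>
      rw [incRunLen]
      split
      · rw [List.take_succ_cons]
        refine List.IsChain.cons ih ?_
        intro y hy
        have h1 : 1 ≤ incRunLen (b :: t') := incRunLen_pos (by simp)
        obtain ⟨k, hk⟩ : ∃ k, incRunLen (b :: t') = k + 1 := ⟨_, (Nat.succ_pred_eq_of_pos h1).symm⟩
        rw [hk, List.take_succ_cons] at hy
        simp at hy
        subst hy
        assumption
      · simp

private lemma le_decRunLen {l : List ℕ} {k : ℕ} (hk : k ≤ l.length)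
    (h : (l.take k).IsChain (· > ·)) : k ≤ decRunLen l := by
  induction l generalizing k with
  | nil => simp at hk; simp [hk, decRunLen]
  | cons a t ih =>
    match t with
    | [] => simp at hk; simp [decRunLen]; omega
    | b :: t' =>
      rw [decRunLen]
      match k with
      | 0 => omega
      | 1 => split <;> omega
      | k + 2 =>
        rw [List.take_succ_cons] at h
        have hab : a > b := by
          have := List.isChain_cons_cons.1 (by
            have h2 : 1 ≤ k + 1 := by omega
            rwa [show k + 1 = (k) + 1 from rfl, List.take_succ_cons] at h)
          exact this.1
        rw [if_pos hab]
        have := ih (k := k + 1) (by simp at hk ⊢; omega) (by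
          rw [List.take_succ_cons] at h
          exact h.tail)
        omega

private lemma le_incRunLen {l : List ℕ} {k : ℕ} (hk : k ≤ l.length)
    (h : (l.take k).IsChain (· < ·)) : k ≤ incRunLen l := by
  induction l generalizing k with
  | nil => simp at hk; simp [hk, incRunLen]
  | cons a t ih =>
    match t with
    | [] => simp at hk; simp [incRunLen]; omega
    | b :: t' =>
      rw [incRunLen]
      match k with
      | 0 => omega
      | 1 => split <;> omega
      | k + 2 =>
        rw [List.take_succ_cons] at h
        have hab : a < b := by
          have := List.isChain_cons_cons.1 (by
            rwa [show k + 1 = (k) + 1 from rfl, List.take_succ_cons] at h)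
          exact this.1
        rw [if_pos hab]
        have := ih (k := k + 1) (by simp at hk ⊢; omega) (by
          rw [List.take_succ_cons] at h
          exact h.tail)
        omega

private lemma lastLayer_eq_drop (q : List ℕ) :
    lastLayer q = q.drop (q.length - incRunLen q.reverse) := by
  unfold lastLayer
  have := List.reverse_take (l := q.reverse) (i := incRunLen q.reverse)
  rw [this]
  simp

private lemma lastLayer_length (q : List ℕ) :
    (lastLayer q).length = incRunLen q.reverse := by
  rw [lastLayer_eq_drop, List.length_drop]
  have h1 := incRunLen_le q.reverse
  rw [List.length_reverse] at h1
  omega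

private lemma lastLayer_chain (q : List ℕ) : (lastLayer q).IsChain (· > ·) := by
  unfold lastLayer
  rw [List.isChain_reverse]
  exact incRun_chain q.reverse

private lemma firstLayer_chain (q : List ℕ) : (firstLayer q).IsChain (· > ·) :=
  decRun_chain q

private lemma mem_drop_iff_pos {A : List ℕ} (hnd : A.Nodup) {i t : ℕ} (hi : i < A.length) :
    A[i] ∈ A.drop t ↔ t ≤ i := by
  constructor
  · intro h
    obtain ⟨j, hj, he⟩ := List.mem_iff_getElem.1 h
    rw [List.getElem_drop] at he
    have := (hnd.getElem_inj_iff).1 he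
    omega
  · intro h
    have hlt : i - t < (A.drop t).length := by simp [List.length_drop]; omega
    refine List.mem_iff_getElem.2 ⟨i - t, hlt, ?_⟩
    rw [List.getElem_drop]
    congr 1
    omega

private lemma mem_take_iff_pos {A : List ℕ} (hnd : A.Nodup) {i t : ℕ} (hi : i < A.length) :
    A[i] ∈ A.take t ↔ i < t := by
  constructor
  · intro h
    obtain ⟨j, hj, he⟩ := List.mem_iff_getElem.1 h
    rw [List.getElem_take] at he
    have := (hnd.getElem_inj_iff).1 he
    simp [List.length_take] at hj
    omega
  · intro h
    have hlt : i < (A.take t).length := by simp [List.length_take]; omega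
    refine List.mem_iff_getElem.2 ⟨i, hlt, ?_⟩
    rw [List.getElem_take]

private lemma pos_mem_lastLayer {A : List ℕ} (hnd : A.Nodup) {i : ℕ} (hi : i < A.length) :
    A[i] ∈ lastLayer A ↔ A.length - incRunLen A.reverse ≤ i := by
  rw [lastLayer_eq_drop]
  exact mem_drop_iff_pos hnd hi

private lemma pos_mem_firstLayer {B : List ℕ} (hnd : B.Nodup) {j : ℕ} (hj : j < B.length) :
    B[j] ∈ firstLayer B ↔ j < decRunLen B :=
  mem_take_iff_pos hnd hj

private lemma drop_reverse (A : List ℕ) {i : ℕ} (hi : i ≤ A.length) :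
    (A.drop i).reverse = A.reverse.take (A.length - i) := by
  have h := List.reverse_take (l := A.reverse) (i := A.length - i)
  simp only [List.reverse_reverse, List.length_reverse] at h
  rw [show A.length - (A.length - i) = i from by omega] at h
  conv_lhs => rw [← h, List.reverse_reverse]

private lemma drop_chain_le {A : List ℕ} {i : ℕ} (hi : i ≤ A.length)
    (h : (A.drop i).IsChain (· > ·)) : A.length - incRunLen A.reverse ≤ i := by
  have h2 : ((A.drop i).reverse).IsChain (· < ·) := List.isChain_reverse.mpr h
  rw [drop_reverse A hi] at h2
  have h3 : A.length - i ≤ incRunLen A.reverse :=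
    le_incRunLen (by rw [List.length_reverse]; omega) h2
  omega

private lemma chain_last_le {l : List ℕ} (h : l.IsChain (· > ·)) (hl : l ≠ []) {x : ℕ}
    (hx : x ∈ l) : l.getLast hl ≤ x := by
  have hpw := List.isChain_iff_pairwise.1 h
  rw [List.pairwise_iff_getElem] at hpw
  obtain ⟨r, hr, rfl⟩ := List.mem_iff_getElem.1 hx
  rw [List.getLast_eq_getElem]
  have hle : r ≤ l.length - 1 := by omega
  rcases eq_or_lt_of_le hle with he | hlt
  · exact le_of_eq (by congr 1; omega)
  · exact le_of_lt (hpw r (l.length - 1) hr (by omega) (by omega))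

private lemma chain_le_head {l : List ℕ} (h : l.IsChain (· > ·)) (hl : l ≠ []) {x : ℕ}
    (hx : x ∈ l) : x ≤ l.head hl := by
  have hpw := List.isChain_iff_pairwise.1 h
  rw [List.pairwise_iff_getElem] at hpw
  obtain ⟨r, hr, rfl⟩ := List.mem_iff_getElem.1 hx
  rw [List.head_eq_getElem]
  rcases Nat.eq_zero_or_pos r with he | hlt
  · exact le_of_eq (by congr 1)
  · exact le_of_lt (hpw 0 r (by omega) hr hlt)

private lemma no231_prefix {X Y : List ℕ} (h : No231 (X ++ Y)) : No231 X := by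
  intro a b c hab hbc hc hcon
  have hA : ∀ i, i < X.length → (X ++ Y).getD i 0 = X.getD i 0 := fun i hi =>
    List.getD_append X Y 0 i hi
  refine h a b c hab hbc (by rw [List.length_append]; omega) ?_
  rw [hA a (by omega), hA b (by omega), hA c hc]
  exact hcon

private lemma no312_prefix {X Y : List ℕ} (h : No312 (X ++ Y)) : No312 X := by
  intro a b c hab hbc hc hcon
  have hA : ∀ i, i < X.length → (X ++ Y).getD i 0 = X.getD i 0 := fun i hi =>
    List.getD_append X Y 0 i hi
  refine h a b c hab hbc (by rw [List.length_append]; omega) ?_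
  rw [hA a (by omega), hA b (by omega), hA c hc]
  exact hcon

private lemma no231_suffix {X Y : List ℕ} (h : No231 (X ++ Y)) : No231 Y := by
  intro a b c hab hbc hc hcon
  have hB : ∀ j, (X ++ Y).getD (X.length + j) 0 = Y.getD j 0 := fun j => by
    rw [List.getD_append_right X Y 0 _ (by omega)]
    congr 1
    omega
  refine h (X.length + a) (X.length + b) (X.length + c) (by omega) (by omega)
    (by rw [List.length_append]; omega) ?_
  rw [hB a, hB b, hB c]
  exact hcon

private lemma no312_suffix {X Y : List ℕ} (h : No312 (X ++ Y)) : No312 Y := by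
  intro a b c hab hbc hc hcon
  have hB : ∀ j, (X ++ Y).getD (X.length + j) 0 = Y.getD j 0 := fun j => by
    rw [List.getD_append_right X Y 0 _ (by omega)]
    congr 1
    omega
  refine h (X.length + a) (X.length + b) (X.length + c) (by omega) (by omega)
    (by rw [List.length_append]; omega) ?_
  rw [hB a, hB b, hB c]
  exact hcon

private lemma chain'_gt_of_getD : ∀ l : List ℕ,
    (∀ q, q + 1 < l.length → l.getD (q + 1) 0 < l.getD q 0) → l.IsChain (· > ·)
  | [], _ => List.isChain_nil
  | [_], _ => by simp
  | a :: b :: t, h => by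
    refine List.isChain_cons_cons.2 ⟨?_, ?_⟩
    · have := h 0 (by simp)
      simpa using this
    · refine chain'_gt_of_getD (b :: t) ?_
      intro q hq
      have := h (q + 1) (by simp at hq ⊢; omega)
      simpa using this


private lemma drop_chain_decr {A : List ℕ} {t a b : ℕ} (h : (A.drop t).IsChain (· > ·))
    (hta : t ≤ a) (hab : a < b) (hb : b < A.length) : A[b] < A[a] := by
  have hpw := List.isChain_iff_pairwise.1 h
  rw [List.pairwise_iff_getElem] at hpw
  have h1 : a - t < (A.drop t).length := by simp [List.length_drop]; omega
  have h2 : b - t < (A.drop t).length := by simp [List.length_drop]; omega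
  have h3 := hpw (a - t) (b - t) h1 h2 (by omega)
  rw [List.getElem_drop, List.getElem_drop] at h3
  have e1 : t + (a - t) = a := by omega
  have e2 : t + (b - t) = b := by omega
  simp only [e1, e2] at h3
  exact h3

private lemma take_chain_decr {B : List ℕ} {d a b : ℕ} (h : (B.take d).IsChain (· > ·))
    (hab : a < b) (hbd : b < d) (hb : b < B.length) : B[b] < B[a] := by
  have hpw := List.isChain_iff_pairwise.1 h
  rw [List.pairwise_iff_getElem] at hpw
  have h1 : a < (B.take d).length := by simp [List.length_take]; omega
  have h2 : b < (B.take d).length := by simp [List.length_take]; omega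
  have h3 := hpw a b h1 h2 hab
  rw [List.getElem_take, List.getElem_take] at h3
  exact h3

set_option maxHeartbeats 1000000 in
private lemma forward_cond {A B : List ℕ} (hA : A ≠ []) (hB : B ≠ [])
    (hND : (A ++ B).Nodup) (h231 : No231 (A ++ B)) (h312 : No312 (A ++ B))
    (hw : ∃ x ∈ A, ∃ y ∈ B, y < x) :
    (∀ x ∈ lastLayer A, ∀ y ∈ firstLayer B, y < x) ∧
    (∀ x ∈ A, x ∉ lastLayer A → ∀ y ∈ B, x < y) ∧
    (∀ y ∈ B, y ∉ firstLayer B → ∀ x ∈ A, x < y) := by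
  obtain ⟨E, hE⟩ : ∃ E, E = A ++ B := ⟨_, rfl⟩
  rw [← hE] at hND h231 h312
  have hNDA : A.Nodup := (List.nodup_append.1 (by rw [hE] at hND; exact hND)).1
  have hNDB : B.Nodup := (List.nodup_append.1 (by rw [hE] at hND; exact hND)).2.1
  have hApos : 0 < A.length := List.length_pos_iff.2 hA
  have hBpos : 0 < B.length := List.length_pos_iff.2 hB
  have hlen : E.length = A.length + B.length := by rw [hE]; simp
  have hgA : ∀ i, i < A.length → E.getD i 0 = A.getD i 0 := by
    intro i hi; rw [hE]; exact List.getD_append A B 0 i hi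
  have hgetA : ∀ i, ∀ h : i < A.length, E.getD i 0 = A[i] := by
    intro i hi; rw [hgA i hi, List.getD_eq_getElem _ _ hi]
  have hgB : ∀ j, j < B.length → E.getD (A.length + j) 0 = B.getD j 0 := by
    intro j _; rw [hE, List.getD_append_right A B 0 _ (by omega)]
    congr 1; omega
  have hgetB : ∀ j, ∀ h : j < B.length, E.getD (A.length + j) 0 = B[j] := by
    intro j hj; rw [hgB j hj, List.getD_eq_getElem _ _ hj]
  have hinj : ∀ i j, i < E.length → j < E.length → E.getD i 0 = E.getD j 0 → i = j := by
    intro i j hi hj he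
    rw [List.getD_eq_getElem _ _ hi, List.getD_eq_getElem _ _ hj] at he
    exact (hND.getElem_inj_iff).1 he
  have hmemA : ∀ x, x ∈ A → ∃ i, i < A.length ∧ E.getD i 0 = x := by
    intro x hx
    obtain ⟨i, hi, he⟩ := List.mem_iff_getElem.1 hx
    exact ⟨i, hi, by rw [hgetA i hi, he]⟩
  have hmemB : ∀ y, y ∈ B → ∃ j, A.length ≤ j ∧ j < E.length ∧ E.getD j 0 = y := by
    intro y hy
    obtain ⟨j, hj, he⟩ := List.mem_iff_getElem.1 hy
    exact ⟨A.length + j, by omega, by omega, by rw [hgetB j hj, he]⟩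
  obtain ⟨x0, hx0A, y0, hy0B, hyx0⟩ := hw
  obtain ⟨i0, hi0, hvi0⟩ := hmemA x0 hx0A
  obtain ⟨j0, hj0l, hj0r, hvj0⟩ := hmemB y0 hy0B
  have hinv0 : E.getD j0 0 < E.getD i0 0 := by rw [hvi0, hvj0]; exact hyx0
  -- F1 : everything strictly between the witness positions lies strictly between the values
  have hbet : ∀ c, i0 < c → c < j0 →
      E.getD j0 0 < E.getD c 0 ∧ E.getD c 0 < E.getD i0 0 := by
    intro c h1 h2
    have hcN : c < E.length := by omega
    have t1 := h231 i0 c j0 h1 h2 (by omega)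
    have t2 := h312 i0 c j0 h1 h2 (by omega)
    have hne1 : E.getD c 0 ≠ E.getD i0 0 := fun he => by
      have := hinj c i0 hcN (by omega) he; omega
    have hne2 : E.getD c 0 ≠ E.getD j0 0 := fun he => by
      have := hinj c j0 hcN (by omega) he; omega
    omega
  -- F2 : the last entry of A is bigger than the first entry of B
  have hstar : E.getD A.length 0 < E.getD (A.length - 1) 0 := by
    rcases eq_or_lt_of_le (show i0 ≤ A.length - 1 from by omega) with he1 | hl1
    · rcases eq_or_lt_of_le (show A.length ≤ j0 from by omega) with he2 | hl2
      · rw [← he2] at hinv0; rw [he1] at hinv0; exact hinv0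
      · have h1 := (hbet A.length (by omega) hl2).2
        rw [he1] at h1; exact h1
    · rcases eq_or_lt_of_le (show A.length ≤ j0 from by omega) with he2 | hl2
      · have h1 := (hbet (A.length - 1) hl1 (by omega)).1
        rw [← he2] at h1; exact h1
      · by_contra hcon
        push_neg at hcon
        have hne : E.getD (A.length - 1) 0 ≠ E.getD A.length 0 := fun he => by
          have := hinj _ _ (by omega) (by omega) he; omega
        have h1 := (hbet A.length (by omega) hl2).2
        have t2 := h312 i0 (A.length - 1) A.length hl1 (by omega) (by omega)
        omega
  -- F3 : dichotomy
  have hdich : ∀ c, c < E.length → c ≠ A.length - 1 → c ≠ A.length →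
      E.getD c 0 < E.getD A.length 0 ∨ E.getD (A.length - 1) 0 < E.getD c 0 := by
    intro c hc h1 h2
    have hne1 : E.getD c 0 ≠ E.getD (A.length - 1) 0 := fun he => h1 (hinj _ _ hc (by omega) he)
    have hne2 : E.getD c 0 ≠ E.getD A.length 0 := fun he => h2 (hinj _ _ hc (by omega) he)
    rcases (show c < A.length - 1 ∨ A.length < c from by omega) with h | h
    · have t := h231 c (A.length - 1) A.length h (by omega) (by omega)
      omega
    · have t := h312 (A.length - 1) A.length c (by omega) h hc
      omega
  -- F4 : entries of A above the last entry of A must lie in a decreasing suffix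
  have hclaim1 : ∀ i, i < A.length - 1 → E.getD (A.length - 1) 0 < E.getD i 0 →
      A.length - incRunLen A.reverse ≤ i := by
    intro i hi hbig
    have hgt : ∀ j, i ≤ j → j < A.length - 1 → E.getD (A.length - 1) 0 < E.getD j 0 := by
      intro j h1 h2
      rcases eq_or_lt_of_le h1 with rfl | h1'
      · exact hbig
      · have t := h312 i j A.length h1' (by omega) (by omega)
        have h3 : E.getD A.length 0 < E.getD i 0 := lt_trans hstar hbig
        rcases hdich j (by omega) (by omega) (by omega) with h5 | h5
        · omega
        · exact h5
    have hchain : (A.drop i).IsChain (· > ·) := by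
      apply chain'_gt_of_getD
      intro q hq
      rw [List.length_drop] at hq
      have hlt1 : i + q < A.length := by omega
      have hlt2 : i + (q + 1) < A.length := by omega
      have g1 : (A.drop i).getD q 0 = E.getD (i + q) 0 := by
        rw [List.getD_eq_getElem _ _ (by rw [List.length_drop]; omega), List.getElem_drop,
          hgetA _ hlt1]
      have g2 : (A.drop i).getD (q + 1) 0 = E.getD (i + (q + 1)) 0 := by
        rw [List.getD_eq_getElem _ _ (by rw [List.length_drop]; omega), List.getElem_drop,
          hgetA _ hlt2]
      rw [g1, g2, show i + (q + 1) = i + q + 1 from by omega]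
      rcases eq_or_lt_of_le (show i + q + 1 ≤ A.length - 1 from by omega) with he | hlt
      · rw [he]
        exact hgt (i + q) (by omega) (by omega)
      · have t := h231 (i + q) (i + q + 1) (A.length - 1) (by omega) hlt (by omega)
        have h1 := hgt (i + q) (by omega) (by omega)
        have hne : E.getD (i + q) 0 ≠ E.getD (i + q + 1) 0 := fun he2 => by
          have := hinj _ _ (by omega) (by omega) he2; omega
        omega
    exact drop_chain_le (by omega) hchain
  -- the last layer of A is exactly { x ∈ A | x ≥ last entry of A }
  have hllpos : 0 < incRunLen A.reverse :=
    incRunLen_pos (by simpa using hA)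
  have hllle : incRunLen A.reverse ≤ A.length := by
    have := incRunLen_le A.reverse; rwa [List.length_reverse] at this
  have hlastmem : ∀ x, x ∈ A → (x ∈ lastLayer A ↔ E.getD (A.length - 1) 0 ≤ x) := by
    intro x hx
    obtain ⟨i, hi, hvi⟩ := hmemA x hx
    constructor
    · intro hxl
      have hll : lastLayer A ≠ [] := by
        intro hnil
        have h1 := lastLayer_length A
        rw [hnil] at h1
        simp at h1
        omega
      have hlast : (lastLayer A).getLast hll = E.getD (A.length - 1) 0 := by
        have hd := lastLayer_eq_drop A
        rw [List.getLast_eq_getElem]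
        have h1 : (lastLayer A).length = incRunLen A.reverse := lastLayer_length A
        have h2 : (lastLayer A).length - 1 < (lastLayer A).length := by omega
        have h3 : (lastLayer A)[(lastLayer A).length - 1] =
            (A.drop (A.length - incRunLen A.reverse))[(lastLayer A).length - 1]'(by
              rw [← hd]; exact h2) := by
          congr 1
        rw [h3, List.getElem_drop, hgetA _ (by simp [List.length_drop] at *; omega)]
        congr 1
        simp [List.length_drop] at *
        omega
      have := chain_last_le (lastLayer_chain A) hll hxl
      rw [hlast] at this
      exact this
    · intro hge
      rcases eq_or_lt_of_le hge with he | hlt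
      · have hieq : i = A.length - 1 := hinj i (A.length - 1) (by omega) (by omega) (by omega)
        have : x = A[A.length - 1]'(by omega) := by rw [← hgetA _ (by omega), ← hieq, hvi]
        rw [this]
        rw [pos_mem_lastLayer hNDA (by omega)]
        omega
      · have hipA : i ≠ A.length - 1 := fun he => by
          rw [he] at hvi; omega
        have ht := hclaim1 i (by omega) (by omega)
        have : x = A[i] := by rw [← hgetA _ hi, hvi]
        rw [this, pos_mem_lastLayer hNDA hi]
        exact ht
  -- dual facts for B
  have hclaim2 : ∀ j, A.length < j → j < E.length → E.getD j 0 < E.getD A.length 0 →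
      j - A.length < decRunLen B := by
    intro j hj1 hj2 hsmall
    have hlt' : ∀ k, A.length < k → k ≤ j → E.getD k 0 < E.getD A.length 0 := by
      intro k h1 h2
      rcases eq_or_lt_of_le h2 with rfl | h2'
      · exact hsmall
      · have t := h231 (A.length - 1) k j (by omega) h2' (by omega)
        rcases hdich k (by omega) (by omega) (by omega) with h5 | h5
        · exact h5
        · omega
    have hchain : (B.take (j - A.length + 1)).IsChain (· > ·) := by
      apply chain'_gt_of_getD
      intro q hq
      rw [List.length_take] at hq
      have hqlen : q + 1 ≤ j - A.length := by omega
      have hb1 : q < B.length := by omega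
      have hb2 : q + 1 < B.length := by omega
      have g1 : (B.take (j - A.length + 1)).getD q 0 = E.getD (A.length + q) 0 := by
        rw [List.getD_eq_getElem _ _ (by rw [List.length_take]; omega), List.getElem_take,
          hgetB _ hb1]
      have g2 : (B.take (j - A.length + 1)).getD (q + 1) 0 = E.getD (A.length + (q + 1)) 0 := by
        rw [List.getD_eq_getElem _ _ (by rw [List.length_take]; omega), List.getElem_take,
          hgetB _ hb2]
      rw [g1, g2, show A.length + (q + 1) = A.length + q + 1 from by omega]
      have h1 := hlt' (A.length + q + 1) (by omega) (by omega)
      rcases Nat.eq_zero_or_pos q with rfl | hqpos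
      · simpa using h1
      · have t := h312 A.length (A.length + q) (A.length + q + 1) (by omega) (by omega) (by omega)
        have hne : E.getD (A.length + q) 0 ≠ E.getD (A.length + q + 1) 0 := fun he2 => by
          have := hinj _ _ (by omega) (by omega) he2; omega
        omega
    have := le_decRunLen (by omega) hchain
    omega
  have hfpos : 0 < decRunLen B := decRunLen_pos hB
  have hfirstmem : ∀ y, y ∈ B → (y ∈ firstLayer B ↔ y ≤ E.getD A.length 0) := by
    intro y hy
    obtain ⟨j, hjl, hjr, hvj⟩ := hmemB y hy
    constructor
    · intro hyf
      have hfl : firstLayer B ≠ [] := by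
        intro hnil
        have h1 : (B.take (decRunLen B)).length = 0 := by
          rw [show B.take (decRunLen B) = firstLayer B from rfl, hnil]
          rfl
        rw [List.length_take] at h1
        omega
      have hb0 : B[0]'hBpos = E.getD A.length 0 := by
        rw [← hgetB 0 hBpos, Nat.add_zero]
      have hhead : (firstLayer B).head hfl = E.getD A.length 0 := by
        rw [List.head_eq_getElem]
        have h3 : (firstLayer B)[0]'(List.length_pos_iff.2 hfl) = (B.take (decRunLen B))[0]'(by
            rw [List.length_take]; omega) := by congr 1
        rw [h3, List.getElem_take, hb0]
      have := chain_le_head (firstLayer_chain B) hfl hyf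
      rw [hhead] at this
      exact this
    · intro hge
      rcases eq_or_lt_of_le hge with he | hlt
      · have hb0 : B[0]'hBpos = E.getD A.length 0 := by
          rw [← hgetB 0 hBpos, Nat.add_zero]
        have : y = B[0]'hBpos := by rw [hb0]; exact he
        rw [this, pos_mem_firstLayer hNDB hBpos]
        omega
      · have hjpB : j ≠ A.length := fun he => by rw [he] at hvj; omega
        have ht := hclaim2 j (by omega) hjr (by omega)
        have hjB : j - A.length < B.length := by omega
        have : y = B[j - A.length] := by
          rw [← hgetB _ hjB, ← hvj]
          congr 1
          omega
        rw [this, pos_mem_firstLayer hNDB hjB]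
        exact ht
  refine ⟨?_, ?_, ?_⟩
  · -- clause 1
    intro x hxl y hyf
    have hxA : x ∈ A := by
      rw [lastLayer_eq_drop] at hxl
      exact List.drop_subset _ _ hxl
    have hyB : y ∈ B := List.take_subset _ _ hyf
    have h1 := (hlastmem x hxA).1 hxl
    have h2 := (hfirstmem y hyB).1 hyf
    omega
  · -- clause 2
    intro x hxA hxnl y hyB
    obtain ⟨i, hi, hvi⟩ := hmemA x hxA
    have hxlt : x < E.getD (A.length - 1) 0 := by
      by_contra hcon
      push_neg at hcon
      exact hxnl ((hlastmem x hxA).2 hcon)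
    have hipA : i ≠ A.length - 1 := fun he => by rw [he] at hvi; omega
    have hxy : x < E.getD A.length 0 := by
      rcases hdich i (by omega) hipA (by omega) with h | h
      · omega
      · omega
    obtain ⟨j, hjl, hjr, hvj⟩ := hmemB y hyB
    rcases eq_or_lt_of_le hjl with he | hlt
    · rw [← he] at hvj
      omega
    · rcases hdich j (by omega) (by omega) (by omega) with h | h
      · have t := h231 i A.length j (by omega) hlt (by omega)
        have hne : E.getD i 0 ≠ E.getD j 0 := fun he2 => by
          have := hinj i j (by omega) (by omega) he2; omega
        omega
      · omega
  · -- clause 3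
    intro y hyB hynf x hxA
    obtain ⟨j, hjl, hjr, hvj⟩ := hmemB y hyB
    have hygt : E.getD A.length 0 < y := by
      by_contra hcon
      push_neg at hcon
      exact hynf ((hfirstmem y hyB).2 hcon)
    have hjpB : j ≠ A.length := fun he => by rw [he] at hvj; omega
    have hyx : E.getD (A.length - 1) 0 < y := by
      rcases hdich j (by omega) (by omega) hjpB with h | h
      · omega
      · omega
    obtain ⟨i, hi, hvi⟩ := hmemA x hxA
    rcases eq_or_lt_of_le (show i ≤ A.length - 1 from by omega) with he | hlt
    · rw [he] at hvi
      omega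
    · have t := h312 i (A.length - 1) j hlt (by omega) (by omega)
      have hne : E.getD i 0 ≠ E.getD j 0 := fun he2 => by
        have := hinj i j (by omega) (by omega) he2; omega
      omega

set_option maxHeartbeats 1000000 in
private lemma backward_cond {A B : List ℕ} (hA : A ≠ []) (hB : B ≠ [])
    (hND : (A ++ B).Nodup)
    (hA231 : No231 A) (hA312 : No312 A) (hB231 : No231 B) (hB312 : No312 B)
    (hcond : (∀ x ∈ A, ∀ y ∈ B, x < y) ∨
      ((∀ x ∈ lastLayer A, ∀ y ∈ firstLayer B, y < x) ∧
       (∀ x ∈ A, x ∉ lastLayer A → ∀ y ∈ B, x < y) ∧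
       (∀ y ∈ B, y ∉ firstLayer B → ∀ x ∈ A, x < y))) :
    No231 (A ++ B) ∧ No312 (A ++ B) := by
  obtain ⟨E, hE⟩ : ∃ E, E = A ++ B := ⟨_, rfl⟩
  rw [← hE] at hND
  have hNDA : A.Nodup := (List.nodup_append.1 (by rw [hE] at hND; exact hND)).1
  have hNDB : B.Nodup := (List.nodup_append.1 (by rw [hE] at hND; exact hND)).2.1
  have hApos : 0 < A.length := List.length_pos_iff.2 hA
  have hBpos : 0 < B.length := List.length_pos_iff.2 hB
  have hlen : E.length = A.length + B.length := by rw [hE]; simp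
  have hgDA : ∀ i, i < A.length → E.getD i 0 = A.getD i 0 := by
    intro i hi
    rw [hE]
    exact List.getD_append A B 0 i hi
  have hgDB : ∀ j, A.length ≤ j → E.getD j 0 = B.getD (j - A.length) 0 := by
    intro j hj
    rw [hE]
    exact List.getD_append_right A B 0 j hj
  have hgetA : ∀ i, ∀ h : i < A.length, E.getD i 0 = A[i] := by
    intro i hi
    rw [hgDA i hi, List.getD_eq_getElem _ _ hi]
  have hgetB : ∀ j, A.length ≤ j → ∀ h : j - A.length < B.length,
      E.getD j 0 = B[j - A.length] := by
    intro j hj h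
    rw [hE, List.getD_append_right A B 0 _ hj, List.getD_eq_getElem _ _ h]
  have hmemEA : ∀ i, ∀ h : i < A.length, E.getD i 0 ∈ A := by
    intro i hi; rw [hgetA i hi]; exact List.getElem_mem hi
  have hmemEB : ∀ j, A.length ≤ j → j < E.length → E.getD j 0 ∈ B := by
    intro j h1 h2
    have h3 : j - A.length < B.length := by omega
    rw [hgetB j h1 h3]; exact List.getElem_mem h3
  -- last layer of A as a decreasing suffix, first layer of B as a decreasing prefix
  have hlastpos : ∀ i, ∀ h : i < A.length, A[i] ∈ lastLayer A ↔
      A.length - incRunLen A.reverse ≤ i := fun i h => pos_mem_lastLayer hNDA h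
  have hfirstpos : ∀ j, ∀ h : j < B.length, B[j] ∈ firstLayer B ↔ j < decRunLen B :=
    fun j h => pos_mem_firstLayer hNDB h
  have hdropchain : (A.drop (A.length - incRunLen A.reverse)).IsChain (· > ·) := by
    have := lastLayer_chain A
    rwa [lastLayer_eq_drop] at this
  have htakechain : (B.take (decRunLen B)).IsChain (· > ·) := firstLayer_chain B
  rw [← hE]
  constructor
  · -- no 231 pattern
    intro a b c hab hbc hc hcon
    rcases (show c < A.length ∨ A.length ≤ a ∨
        (a < A.length ∧ A.length ≤ c) from by omega) with h | h | ⟨ha, hcB⟩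
    · refine hA231 a b c hab hbc h ?_
      rw [← hgDA a (by omega), ← hgDA b (by omega), ← hgDA c (by omega)]
      exact hcon
    · refine hB231 (a - A.length) (b - A.length) (c - A.length) (by omega) (by omega)
        (by omega) ?_
      rw [← hgDB a (by omega), ← hgDB b (by omega), ← hgDB c (by omega)]
      exact hcon
    · -- mixed case: values z < x < y with x = u a, y = u b, z = u c
      have hxA : E.getD a 0 ∈ A := hmemEA a ha
      have hzB : E.getD c 0 ∈ B := hmemEB c hcB (by omega)
      rcases hcond with h1 | ⟨c1, c2, c3⟩
      · have := h1 _ hxA _ hzB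
        omega
      rcases (show b < A.length ∨ A.length ≤ b from by omega) with hbA | hbB
      · -- a, b in A and c in B
        have hyA : E.getD b 0 ∈ A := hmemEA b hbA
        have hxl : E.getD a 0 ∈ lastLayer A := by
          by_contra hnl
          have := c2 _ hxA hnl _ hzB
          omega
        have hta : A.length - incRunLen A.reverse ≤ a := by
          rw [hgetA a ha] at hxl
          exact (hlastpos a ha).1 hxl
        have := drop_chain_decr hdropchain hta hab hbA
        rw [← hgetA a ha, ← hgetA b hbA] at this
        omega
      · -- a in A, b and c in B
        have hyB : E.getD b 0 ∈ B := hmemEB b hbB (by omega)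
        have hznf : E.getD c 0 ∈ firstLayer B := by
          by_contra hnf
          have := c3 _ hzB hnf _ hxA
          omega
        have hynf : E.getD b 0 ∉ firstLayer B := by
          intro hyf
          have hxl : E.getD a 0 ∈ lastLayer A := by
            by_contra hnl
            have := c2 _ hxA hnl _ hzB
            omega
          have := c1 _ hxl _ hyf
          omega
        rw [hgetB b hbB (by omega)] at hynf
        rw [hgetB c hcB (by omega)] at hznf
        have h5 := (hfirstpos (c - A.length) (by omega)).1 hznf
        have h6 : ¬ (b - A.length < decRunLen B) := fun hx =>
          hynf ((hfirstpos (b - A.length) (by omega)).2 hx)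
        omega
  · -- no 312 pattern
    intro a b c hab hbc hc hcon
    rcases (show c < A.length ∨ A.length ≤ a ∨
        (a < A.length ∧ A.length ≤ c) from by omega) with h | h | ⟨ha, hcB⟩
    · refine hA312 a b c hab hbc h ?_
      rw [← hgDA a (by omega), ← hgDA b (by omega), ← hgDA c (by omega)]
      exact hcon
    · refine hB312 (a - A.length) (b - A.length) (c - A.length) (by omega) (by omega)
        (by omega) ?_
      rw [← hgDB a (by omega), ← hgDB b (by omega), ← hgDB c (by omega)]
      exact hcon
    · -- mixed case: values y < z < x with x = u a, y = u b, z = u c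
      have hxA : E.getD a 0 ∈ A := hmemEA a ha
      have hzB : E.getD c 0 ∈ B := hmemEB c hcB (by omega)
      rcases hcond with h1 | ⟨c1, c2, c3⟩
      · have := h1 _ hxA _ hzB
        omega
      have hxl : E.getD a 0 ∈ lastLayer A := by
        by_contra hnl
        have := c2 _ hxA hnl _ hzB
        omega
      have hzf : E.getD c 0 ∈ firstLayer B := by
        by_contra hnf
        have := c3 _ hzB hnf _ hxA
        omega
      rcases (show b < A.length ∨ A.length ≤ b from by omega) with hbA | hbB
      · -- a, b in A and c in B
        have hyA : E.getD b 0 ∈ A := hmemEA b hbA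
        have hta : A.length - incRunLen A.reverse ≤ a := by
          rw [hgetA a ha] at hxl
          exact (hlastpos a ha).1 hxl
        have hyl : E.getD b 0 ∈ lastLayer A := by
          rw [hgetA b hbA]
          exact (hlastpos b hbA).2 (by omega)
        have := c1 _ hyl _ hzf
        omega
      · -- a in A, b and c in B
        have hyB : E.getD b 0 ∈ B := hmemEB b hbB (by omega)
        have hyf : E.getD b 0 ∈ firstLayer B := by
          by_contra hnf
          have := c3 _ hyB hnf _ hxA
          omega
        rw [hgetB b hbB (by omega)] at hyf
        rw [hgetB c hcB (by omega)] at hzf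
        have h5 := (hfirstpos (c - A.length) (by omega)).1 hzf
        have := take_chain_decr htakechain (show b - A.length < c - A.length from by omega)
          h5 (by omega)
        rw [← hgetB b hbB (by omega), ← hgetB c hcB (by omega)] at this
        omega

private lemma main_iff {A B : List ℕ} (hA : A ≠ []) (hB : B ≠ [])
    (hND : (A ++ B).Nodup) :
    (No231 (A ++ B) ∧ No312 (A ++ B)) ↔
    ((No231 A ∧ No312 A) ∧ (No231 B ∧ No312 B) ∧
      ((∀ x ∈ A, ∀ y ∈ B, x < y) ∨
       ((∀ x ∈ lastLayer A, ∀ y ∈ firstLayer B, y < x) ∧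
        (∀ x ∈ A, x ∉ lastLayer A → ∀ y ∈ B, x < y) ∧
        (∀ y ∈ B, y ∉ firstLayer B → ∀ x ∈ A, x < y)))) := by
  constructor
  · rintro ⟨h231, h312⟩
    refine ⟨⟨no231_prefix h231, no312_prefix h312⟩,
      ⟨no231_suffix h231, no312_suffix h312⟩, ?_⟩
    by_cases hc1 : ∀ x ∈ A, ∀ y ∈ B, x < y
    · exact Or.inl hc1
    · refine Or.inr (forward_cond hA hB hND h231 h312 ?_)
      push_neg at hc1
      obtain ⟨x, hx, y, hy, hxy⟩ := hc1
      refine ⟨x, hx, y, hy, ?_⟩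
      rcases lt_or_eq_of_le hxy with h | h
      · exact h
      · exfalso
        have hdisj := (List.nodup_append.1 hND).2.2
        exact hdisj x hx x (h ▸ hy) rfl
  · rintro ⟨⟨hA231, hA312⟩, ⟨hB231, hB312⟩, hcond⟩
    exact backward_cond hA hB hND hA231 hA312 hB231 hB312 hcond

private lemma no_ext {E : List ℕ} {n : ℕ} (h : ∀ x ∈ E, x < n) :
    (No231 (E ++ [n]) ∧ No312 (E ++ [n])) ↔ (No231 E ∧ No312 E) := by
  have hlen : (E ++ [n]).length = E.length + 1 := by simp
  have hval : ∀ i, i < E.length → (E ++ [n]).getD i 0 < n := by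
    intro i hi
    rw [List.getD_append E [n] 0 i hi, List.getD_eq_getElem _ _ hi]
    exact h _ (List.getElem_mem hi)
  have hlast : (E ++ [n]).getD E.length 0 = n := by
    rw [List.getD_append_right E [n] 0 E.length le_rfl]
    simp
  constructor
  · rintro ⟨h1, h2⟩
    exact ⟨no231_prefix h1, no312_prefix h2⟩
  · rintro ⟨h1, h2⟩
    constructor <;> intro a b c hab hbc hc hcon
    · rcases (show c < E.length ∨ c = E.length from by omega) with h3 | h3
      · refine h1 a b c hab hbc h3 ?_
        rwa [List.getD_append E [n] 0 a (by omega), List.getD_append E [n] 0 b (by omega),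
          List.getD_append E [n] 0 c h3] at hcon
      · rw [h3, hlast] at hcon
        have := hval a (by omega)
        omega
    · rcases (show c < E.length ∨ c = E.length from by omega) with h3 | h3
      · refine h2 a b c hab hbc h3 ?_
        rwa [List.getD_append E [n] 0 a (by omega), List.getD_append E [n] 0 b (by omega),
          List.getD_append E [n] 0 c h3] at hcon
      · rw [h3, hlast] at hcon
        have := hval a (by omega)
        omega

/-- let `p = L n R` be a permutation of length `n` (so `n` is its
maximum entry) with `L, R` nonempty. Then `s(p) = s(L) s(R) n`, and `s(p)` avoids
both `231` and `312` if and only if `s(L)` and `s(R)` both avoid `231` and `312`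
(so each is layered) and either (1) every entry of `L` is less than every entry of
`R`, or (2) every entry of the last layer of `s(L)` is greater than every entry of
the first layer of `s(R)`, every entry of `L` not in the last layer of `s(L)` is
less than every entry of `R`, and every entry of `R` not in the first layer of
`s(R)` is greater than every entry of `L`. -/
theorem av231_312_split (n : ℕ) (L R : List ℕ) (hL : L ≠ []) (hR : R ≠ [])
    (hp : IsPermList n (L ++ n :: R)) :
    stackSort (L ++ n :: R) = stackSort L ++ stackSort R ++ [n] ∧
    ((AvoidsPat (stackSort (L ++ n :: R)) [2, 3, 1] ∧
        AvoidsPat (stackSort (L ++ n :: R)) [3, 1, 2]) ↔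
      ((AvoidsPat (stackSort L) [2, 3, 1] ∧ AvoidsPat (stackSort L) [3, 1, 2]) ∧
       (AvoidsPat (stackSort R) [2, 3, 1] ∧ AvoidsPat (stackSort R) [3, 1, 2]) ∧
       ((∀ x ∈ L, ∀ y ∈ R, x < y) ∨
        ((∀ x ∈ lastLayer (stackSort L), ∀ y ∈ firstLayer (stackSort R), y < x) ∧
         (∀ x ∈ L, x ∉ lastLayer (stackSort L) → ∀ y ∈ R, x < y) ∧
         (∀ y ∈ R, y ∉ firstLayer (stackSort R) → ∀ x ∈ L, x < y))))) := by
  have hmapnd : ((List.range n).map (· + 1)).Nodup :=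
    List.Nodup.map (fun a b hab => by omega) List.nodup_range
  have hnd : (L ++ n :: R).Nodup := hp.symm.nodup hmapnd
  have hmem : ∀ x ∈ L ++ n :: R, x ≤ n := by
    intro x hx
    have h1 := hp.mem_iff.1 hx
    simp only [List.mem_map, List.mem_range] at h1
    omega
  have hnL : n ∉ L := fun hx => (List.nodup_append.1 hnd).2.2 n hx n (by simp) rfl
  have hnR : n ∉ R := by
    have := (List.nodup_append.1 hnd).2.1
    exact (List.nodup_cons.1 this).1
  have hLlt : ∀ x ∈ L, x < n := fun x hx =>
    lt_of_le_of_ne (hmem x (by simp [hx])) (fun he => hnL (he ▸ hx))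
  have hRlt : ∀ x ∈ R, x < n := fun x hx =>
    lt_of_le_of_ne (hmem x (by simp [hx])) (fun he => hnR (he ▸ hx))
  have hm : (L ++ n :: R).foldr max 0 = n :=
    le_antisymm (foldr_max_le hmem) (le_foldr_max (by simp))
  have htake : (L ++ n :: R).takeWhile (fun x => x ≠ n) = L := by
    have hLt : L.takeWhile (fun x => decide (x ≠ n)) = L :=
      List.takeWhile_eq_self_iff.2 (fun x hx => by
        simp only [decide_eq_true_eq]
        exact Nat.ne_of_lt (hLlt x hx))
    rw [List.takeWhile_append, hLt, if_pos rfl]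
    simp [List.takeWhile_cons]
  have hdrop : (L ++ n :: R).dropWhile (fun x => x ≠ n) = n :: R := by
    have hLd : L.dropWhile (fun x => decide (x ≠ n)) = [] :=
      List.dropWhile_eq_nil_iff.2 (fun x hx => by
        simp only [decide_eq_true_eq]
        exact Nat.ne_of_lt (hLlt x hx))
    rw [List.dropWhile_append, hLd]
    simp [List.dropWhile_cons]
  have hsplit : stackSort (L ++ n :: R) = stackSort L ++ stackSort R ++ [n] := by
    rw [stackSort_eq_split _ (by simp), hm, htake, hdrop, List.tail_cons]
  refine ⟨hsplit, ?_⟩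
  rw [hsplit]
  have hpL := stackSort_perm L
  have hpR := stackSort_perm R
  have hAne : stackSort L ≠ [] := fun he => hL ((he ▸ hpL).symm.eq_nil)
  have hBne : stackSort R ≠ [] := fun he => hR ((he ▸ hpR).symm.eq_nil)
  have hndLR : (L ++ R).Nodup :=
    ((List.sublist_cons_self n R).append_left L).nodup hnd
  have hndAB : (stackSort L ++ stackSort R).Nodup := (hpL.append hpR).symm.nodup hndLR
  have hablt : ∀ x ∈ stackSort L ++ stackSort R, x < n := by
    intro x hx
    rcases List.mem_append.1 hx with h | h
    · exact hLlt x (hpL.mem_iff.1 h)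
    · exact hRlt x (hpR.mem_iff.1 h)
  rw [avoids231_iff, avoids312_iff, avoids231_iff, avoids312_iff, avoids231_iff, avoids312_iff,
    no_ext hablt, main_iff hAne hBne hndAB]
  simp only [hpL.mem_iff, hpR.mem_iff]
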